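/- arXiv:1805.11335 — 3 statements merged into one kernel-verified Lean document; each statement's English description precedes it below -/
import Mathlib

section
/- Let a, b, c, p, q ∈ EuclideanSpace ℝ (Fin 3) be such that det(b − a, c − a, p − a) · det(b − a, c − a, q − a) < 0 (i.e. the two signed volumes are nonzero and of opposite sign, so that p and q lie strictly on opposite sides of the plane through a, b, c). Then the topological interiors of the two tetrahedra convexHull ℝ {a, b, c, p} and convexHull ℝ {a, b, c, q} are disjoint. -/
/-- Scalar triple product of three vectors in `ℝ³`. -/
noncomputable def det3 (u v w : EuclideanSpace ℝ (Fin 3)) : ℝ :=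
  Matrix.det !![u 0, v 0, w 0; u 1, v 1, w 1; u 2, v 2, w 2]

/-- `det3 u v ·` as a continuous linear map. -/
noncomputable def detL (u v : EuclideanSpace ℝ (Fin 3)) :
    EuclideanSpace ℝ (Fin 3) →L[ℝ] ℝ :=
  LinearMap.toContinuousLinearMap
  { toFun := fun w => det3 u v w
    map_add' := by
      intro w w'
      simp [det3, Matrix.det_fin_three, PiLp.add_apply]
      ring
    map_smul' := by
      intro r w
      simp [det3, Matrix.det_fin_three, PiLp.smul_apply, smul_eq_mul]
      ring }

lemma detL_apply (u v w : EuclideanSpace ℝ (Fin 3)) : detL u v w = det3 u v w := rfl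

lemma det3_sub (u v w x : EuclideanSpace ℝ (Fin 3)) :
    det3 u v (w - x) = det3 u v w - det3 u v x := by
  simp [det3, Matrix.det_fin_three, PiLp.sub_apply]
  ring

lemma det3_self₁ (u v : EuclideanSpace ℝ (Fin 3)) : det3 u v u = 0 := by
  simp [det3, Matrix.det_fin_three]

lemma det3_self₂ (u v : EuclideanSpace ℝ (Fin 3)) : det3 u v v = 0 := by
  simp [det3, Matrix.det_fin_three]

lemma interior_halfspace_subset {E : Type*} [NormedAddCommGroup E] [NormedSpace ℝ E]
    (f : E →L[ℝ] ℝ) (v : E) (hv : f v ≠ 0) (t : ℝ) :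
    interior {x | f x ≤ t} ⊆ {x | f x < t} := by
  intro x hx
  have hle : f x ≤ t := by
    have := interior_subset hx
    simpa [Set.mem_setOf_eq] using this
  rcases lt_or_eq_of_le hle with hlt | heq
  · exact hlt
  exfalso
  set w : E := if 0 < f v then v else -v with hw
  have hfw : 0 < f w := by
    rcases lt_trichotomy (f v) 0 with h1 | h1 | h1
    · simp [hw, not_lt.2 h1.le]; linarith
    · exact absurd h1 hv
    · simp [hw, h1]
  have hmem : {x | f x ≤ t} ∈ nhds x := mem_interior_iff_mem_nhds.1 hx
  have hcont : Filter.Tendsto (fun s : ℝ => x + s • w) (nhds 0) (nhds x) := by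
    have : Continuous (fun s : ℝ => x + s • w) := by continuity
    have h0 := this.tendsto 0
    simpa using h0
  have hev : ∀ᶠ s : ℝ in nhds 0, f (x + s • w) ≤ t := hcont.eventually hmem
  have hev' : ∀ᶠ s : ℝ in nhdsWithin 0 (Set.Ioi 0), f (x + s • w) ≤ t :=
    hev.filter_mono nhdsWithin_le_nhds
  obtain ⟨s, hs, hspos⟩ := (hev'.and self_mem_nhdsWithin).exists
  have : f x + s * f w ≤ t := by
    simpa [map_add, map_smul, smul_eq_mul] using hs
  have : s * f w ≤ 0 := by linarith [heq ▸ this]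
  nlinarith [hspos]

lemma aux_disjoint (a b c p q : EuclideanSpace ℝ (Fin 3))
    (hp : det3 (b - a) (c - a) (p - a) < 0)
    (hq : 0 < det3 (b - a) (c - a) (q - a)) :
    Disjoint (interior (convexHull ℝ {a, b, c, p}))
      (interior (convexHull ℝ {a, b, c, q})) := by
  set u := b - a
  set v := c - a
  set f := detL u v with hf
  set t := f a with ht
  have hfb : f b = t := by
    have : det3 u v (b - a) = 0 := det3_self₁ u v
    rw [det3_sub] at this
    simp only [hf, detL_apply, ht]; linarith
  have hfc : f c = t := by
    have : det3 u v (c - a) = 0 := det3_self₂ u v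
    rw [det3_sub] at this
    simp only [hf, detL_apply, ht]; linarith
  have hfp : f p < t := by
    rw [det3_sub] at hp
    simp only [hf, detL_apply, ht]; linarith
  have hfq : t < f q := by
    rw [det3_sub] at hq
    simp only [hf, detL_apply, ht]; linarith
  -- the two tetrahedra are in opposite closed halfspaces
  have hP : convexHull ℝ {a, b, c, p} ⊆ {x | f x ≤ t} := by
    apply convexHull_min
    · intro x hx
      rcases hx with rfl | rfl | rfl | rfl <;> simp [hfb, hfc, le_of_lt hfp, ht] <;> linarith
    · exact convex_halfSpace_le (f.toLinearMap.isLinear) t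
  have hQ : convexHull ℝ {a, b, c, q} ⊆ {x | (-f) x ≤ -t} := by
    apply convexHull_min
    · intro x hx
      rcases hx with rfl | rfl | rfl | rfl <;>
        simp [hfb, hfc, le_of_lt hfq, ht] <;> linarith
    · exact convex_halfSpace_le ((-f).toLinearMap.isLinear) (-t)
  have hfpa : f (p - a) ≠ 0 := by
    simp only [map_sub]
    intro h0
    have h1 := sub_eq_zero.1 h0
    rw [ht] at hfp
    linarith
  have h1 : interior (convexHull ℝ {a, b, c, p}) ⊆ {x | f x < t} :=
    (interior_mono hP).trans (interior_halfspace_subset f (p - a) hfpa t)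
  have hfpa' : (-f) (p - a) ≠ 0 := by
    simp only [ContinuousLinearMap.neg_apply]
    exact neg_ne_zero.2 hfpa
  have h2 : interior (convexHull ℝ {a, b, c, q}) ⊆ {x | (-f) x < -t} :=
    (interior_mono hQ).trans (interior_halfspace_subset (-f) (p - a) hfpa' (-t))
  rw [Set.disjoint_left]
  intro x hx1 hx2
  have := h1 hx1
  have := h2 hx2
  simp only [Set.mem_setOf_eq, ContinuousLinearMap.neg_apply, neg_lt_neg_iff] at *
  linarith

/-- If the apexes `p` and `q` lie strictly on opposite sides of the plane through
`a`, `b`, `c`, then the interiors of the tetrahedra `a b c p` and `a b c q` are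
disjoint. -/
theorem interiors_disjoint_of_opposite_sides
    (a b c p q : EuclideanSpace ℝ (Fin 3))
    (h : det3 (b - a) (c - a) (p - a) * det3 (b - a) (c - a) (q - a) < 0) :
    Disjoint (interior (convexHull ℝ {a, b, c, p}))
      (interior (convexHull ℝ {a, b, c, q})) := by
  rcases mul_neg_iff.1 h with ⟨hp, hq⟩ | ⟨hp, hq⟩
  · exact (aux_disjoint a b c q p hq hp).symm
  · exact aux_disjoint a b c p q hp hq
end

section
/- Let a, b, c, p, q ∈ EuclideanSpace ℝ (Fin 3) be such that det(b − a, c − a, p − a) · det(b − a, c − a, q − a) > 0 (i.e. the two signed volumes are nonzero and of the same sign, so that p and q lie strictly on the same side of the plane through a, b, c). Then the topological interiors of the two tetrahedra convexHull ℝ {a, b, c, p} and convexHull ℝ {a, b, c, q} have nonempty intersection; in particular the two tetrahedra are not volume-disjoint. -/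
set_option maxHeartbeats 1000000

lemma li_of_det3 (u v w : EuclideanSpace ℝ (Fin 3)) (hd : det3 u v w ≠ 0) :
    LinearIndependent ℝ ![u, v, w] := by
  have key : LinearIndependent ℝ (fun i => (Matrix.of ![(u : Fin 3 → ℝ), v, w]) i) := by
    show LinearIndependent ℝ (Matrix.of ![(u : Fin 3 → ℝ), v, w]).row
    rw [Matrix.linearIndependent_rows_iff_isUnit, Matrix.isUnit_iff_isUnit_det,
      isUnit_iff_ne_zero]
    intro h0
    apply hd
    rw [det3] at *
    simp [Matrix.det_fin_three] at *
    linarith [h0]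
  have := key.map' (WithLp.linearEquiv 2 ℝ (Fin 3 → ℝ)).symm.toLinearMap
    (LinearEquiv.ker _)
  convert this using 1
  ext i
  fin_cases i <;> rfl
  rfl

lemma ai_of_det3 (a b c p : EuclideanSpace ℝ (Fin 3))
    (hd : det3 (b - a) (c - a) (p - a) ≠ 0) :
    AffineIndependent ℝ ![a, b, c, p] := by
  have hli := li_of_det3 _ _ _ hd
  rw [affineIndependent_iff_linearIndependent_vsub ℝ _ 0,
    ← linearIndependent_equiv (finSuccAboveEquiv (0 : Fin 4))]
  convert hli using 1
  ext i
  fin_cases i <;> rfl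
  rfl

noncomputable def tetraBasis (a b c p : EuclideanSpace ℝ (Fin 3))
    (hd : det3 (b - a) (c - a) (p - a) ≠ 0) :
    AffineBasis (Fin 4) ℝ (EuclideanSpace ℝ (Fin 3)) :=
  ⟨![a, b, c, p], ai_of_det3 a b c p hd, by
    rw [(ai_of_det3 a b c p hd).affineSpan_eq_top_iff_card_eq_finrank_add_one]
    simp [finrank_euclideanSpace_fin]⟩

lemma range_tetra (a b c p : EuclideanSpace ℝ (Fin 3)) :
    Set.range ![a, b, c, p] = {a, b, c, p} := by
  simp only [Matrix.range_cons, Matrix.range_empty, Set.union_empty]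
  ext y
  simp
  tauto

lemma det3_third_lin (u v w : EuclideanSpace ℝ (Fin 3)) (x1 x2 x3 : ℝ) :
    det3 u v (x1 • u + x2 • v + x3 • w) = x3 * det3 u v w := by
  simp [det3, Matrix.det_fin_three, PiLp.add_apply, PiLp.smul_apply, smul_eq_mul]
  ring

/-- If the apexes `p` and `q` lie strictly on the same side of the plane through
`a`, `b`, `c`, then the interiors of the tetrahedra `a b c p` and `a b c q`
overlap. -/
theorem interiors_overlap_of_same_side
    (a b c p q : EuclideanSpace ℝ (Fin 3))
    (h : 0 < det3 (b - a) (c - a) (p - a) * det3 (b - a) (c - a) (q - a)) :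
    (interior (convexHull ℝ {a, b, c, p}) ∩
      interior (convexHull ℝ {a, b, c, q})).Nonempty := by
  have hd1 : det3 (b - a) (c - a) (p - a) ≠ 0 := by
    intro h0; rw [h0] at h; simp at h
  have hd2 : det3 (b - a) (c - a) (q - a) ≠ 0 := by
    intro h0; rw [h0] at h; simp at h
  set B1 := tetraBasis a b c p hd1 with hB1
  set B2 := tetraBasis a b c q hd2 with hB2
  -- basis of vectors for q
  have hli2 := li_of_det3 _ _ _ hd2
  set V2 : Module.Basis (Fin 3) ℝ (EuclideanSpace ℝ (Fin 3)) :=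
    basisOfLinearIndependentOfCardEqFinrank hli2 (by simp [finrank_euclideanSpace_fin]) with hV2
  have hcoe2 : ⇑V2 = ![b - a, c - a, q - a] := by
    rw [hV2]; exact coe_basisOfLinearIndependentOfCardEqFinrank _ _
  obtain ⟨x1, x2, x3, hrepr⟩ :
      ∃ x1 x2 x3 : ℝ, p - a = x1 • (b - a) + x2 • (c - a) + x3 • (q - a) := by
    have h0 := V2.sum_repr (p - a)
    rw [Fin.sum_univ_three, hcoe2] at h0
    simp only [Matrix.cons_val_zero, Matrix.cons_val_one, Matrix.head_cons,
      Matrix.cons_val_two, Matrix.tail_cons] at h0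
    exact ⟨_, _, _, h0.symm⟩
  clear hcoe2 hV2
  clear_value V2
  have hx3pos : 0 < x3 := by
    have hdet : det3 (b - a) (c - a) (p - a) = x3 * det3 (b - a) (c - a) (q - a) := by
      conv_lhs => rw [show (p - a : EuclideanSpace ℝ (Fin 3)) =
        x1 • (b - a) + x2 • (c - a) + x3 • (q - a) from hrepr]
      exact det3_third_lin _ _ _ x1 x2 x3
    rw [hdet] at h
    nlinarith [sq_nonneg (det3 (b - a) (c - a) (q - a))]
  set K : ℝ := |x1| + |x2| + x3 + 1 with hKd
  have hK : 0 < K := by positivity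
  set γ : ℝ := 1 / (8 * K) with hγd
  have hγ : 0 < γ := by positivity
  have hK1 : 1 ≤ K := by nlinarith [abs_nonneg x1, abs_nonneg x2]
  have hγK : γ * K = 1 / 8 := by rw [hγd]; field_simp
  have hb1 : |x1| ≤ K := by nlinarith [abs_nonneg x2]
  have hb2 : |x2| ≤ K := by nlinarith [abs_nonneg x1]
  have hb3 : x3 ≤ K := by nlinarith [abs_nonneg x1, abs_nonneg x2]
  have hg1 : |γ * x1| ≤ 1 / 8 := by
    rw [abs_mul, abs_of_pos hγ]; nlinarith
  have hg2 : |γ * x2| ≤ 1 / 8 := by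
    rw [abs_mul, abs_of_pos hγ]; nlinarith
  have hg3 : γ * x3 ≤ 1 / 8 := by nlinarith
  have hγ8 : γ ≤ 1 / 8 := by nlinarith [mul_le_mul_of_nonneg_left hK1 hγ.le]
  have hg1' := abs_le.mp hg1
  have hg2' := abs_le.mp hg2
  set w1 : Fin 4 → ℝ := ![1 - 1/4 - 1/4 - γ, 1/4, 1/4, γ] with hw1d
  set w2 : Fin 4 → ℝ := ![1 - (1/4 + γ*x1) - (1/4 + γ*x2) - γ*x3,
      1/4 + γ*x1, 1/4 + γ*x2, γ*x3] with hw2d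
  have hsum1 : (Finset.univ.sum w1) = 1 := by
    rw [hw1d, Fin.sum_univ_four]; simp; ring
  have hsum2 : (Finset.univ.sum w2) = 1 := by
    rw [hw2d, Fin.sum_univ_four]; simp; ring
  set x := Finset.univ.affineCombination ℝ ![a, b, c, p] w1 with hxd
  have hxeq : x = Finset.univ.affineCombination ℝ ![a, b, c, q] w2 := by
    rw [hxd, Finset.affineCombination_eq_linear_combination _ _ _ hsum1,
      Finset.affineCombination_eq_linear_combination _ _ _ hsum2,
      Fin.sum_univ_four, Fin.sum_univ_four]
    simp only [hw1d, hw2d, Matrix.cons_val_zero, Matrix.cons_val_one, Matrix.head_cons,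
      Matrix.cons_val_two, Matrix.tail_cons, Matrix.cons_val_three]
    have hp : p = a + (x1 • (b - a) + x2 • (c - a) + x3 • (q - a)) := by
      rw [← hrepr]; abel
    rw [hp]
    module
  refine ⟨x, ?_, ?_⟩
  · have hcoe1 : ⇑B1 = ![a, b, c, p] := rfl
    rw [← range_tetra a b c p, ← hcoe1, B1.interior_convexHull]
    intro i
    have : B1.coord i x = w1 i := by
      rw [hxd]
      exact B1.coord_apply_combination_of_mem (Finset.mem_univ i) hsum1
    rw [this]
    fin_cases i <;> simp [hw1d] <;> nlinarith
  · have hcoe2' : ⇑B2 = ![a, b, c, q] := rfl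
    rw [← range_tetra a b c q, ← hcoe2', B2.interior_convexHull]
    intro i
    have : B2.coord i x = w2 i := by
      rw [hxeq]
      exact B2.coord_apply_combination_of_mem (Finset.mem_univ i) hsum2
    rw [this]
    fin_cases i <;> simp [hw2d] <;> nlinarith
end

section
/- Let γ : ℝ → EuclideanSpace ℝ (Fin 3) be a continuous closed curve, let K = convexHull ℝ (range γ), and let a, b, c be three affinely independent points of the image of γ such that the triangle T = convexHull ℝ {a, b, c} is a face of K (i.e. IsExtreme ℝ K T holds) and the only points of the image of γ lying in T are a, b, and c. Then the centroid (a + b + c)/3 cannot be written as a convex combination of two points of the curve; that is, there exist no parameters s₁, s₂ and no u ∈ [0, 1] with (a + b + c)/3 = γ(s₁) + u • (γ(s₂) − γ(s₁)). -/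
open Set

/-- If the triangle on three affinely independent curve points `a`, `b`, `c` is a
face of the convex hull `K` of the curve, and `a`, `b`, `c` are the only curve
points in the triangle, then the centroid of the triangle is not a convex
combination of two points of the curve. -/
theorem centroid_not_on_chord
    (γ : ℝ → EuclideanSpace ℝ (Fin 3)) (hγ : Continuous γ)
    (K : Set (EuclideanSpace ℝ (Fin 3))) (hK : K = convexHull ℝ (Set.range γ))
    (a b c : EuclideanSpace ℝ (Fin 3))
    (ha : a ∈ Set.range γ) (hb : b ∈ Set.range γ) (hc : c ∈ Set.range γ)
    (hind : AffineIndependent ℝ ![a, b, c])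
    (hface : IsExtreme ℝ K (convexHull ℝ {a, b, c}))
    (honly : Set.range γ ∩ convexHull ℝ {a, b, c} = {a, b, c}) :
    ¬ ∃ s₁ s₂ : ℝ, ∃ u ∈ Set.Icc (0:ℝ) 1,
        (3:ℝ)⁻¹ • (a + b + c) = γ s₁ + u • (γ s₂ - γ s₁) := by
  rintro ⟨s₁, s₂, u, ⟨hu0, hu1⟩, heq⟩
  set T := convexHull ℝ ({a, b, c} : Set (EuclideanSpace ℝ (Fin 3))) with hT
  have hTconv : Convex ℝ T := convex_convexHull ℝ _
  have haT : a ∈ T := subset_convexHull ℝ _ (by simp)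
  have hbT : b ∈ T := subset_convexHull ℝ _ (by simp)
  have hcT : c ∈ T := subset_convexHull ℝ _ (by simp)
  -- the centroid lies in T
  have hmT : (2:ℝ)⁻¹ • a + (2:ℝ)⁻¹ • b ∈ T :=
    hTconv haT hbT (by norm_num) (by norm_num) (by norm_num)
  have hcentT : (3:ℝ)⁻¹ • (a + b + c) ∈ T := by
    have h := hTconv hmT hcT (by norm_num : (0:ℝ) ≤ 2/3) (by norm_num : (0:ℝ) ≤ 1/3)
      (by norm_num)
    have : (2/3 : ℝ) • ((2:ℝ)⁻¹ • a + (2:ℝ)⁻¹ • b) + (1/3 : ℝ) • c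
        = (3:ℝ)⁻¹ • (a + b + c) := by module
    rwa [this] at h
  -- key algebraic fact
  have key : ∀ (i j : Fin 3) (t : ℝ),
      (3:ℝ)⁻¹ • (a + b + c) = (1 - t) • ![a, b, c] i + t • ![a, b, c] j → False := by
    intro i j t hteq
    obtain ⟨k, hki, hkj⟩ : ∃ k : Fin 3, k ≠ i ∧ k ≠ j := by
      fin_cases i <;> fin_cases j <;> decide
    have hzero := affineIndependent_iff.mp hind Finset.univ
      (fun e => (3:ℝ)⁻¹ - ((if e = i then 1 - t else 0) + (if e = j then t else 0)))
      (by
        fin_cases i <;> fin_cases j <;>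
          simp [Fin.sum_univ_three] <;> ring)
      (by
        have : ∑ e : Fin 3,
            ((3:ℝ)⁻¹ - ((if e = i then 1 - t else 0) + (if e = j then t else 0))) • ![a,b,c] e
            = (3:ℝ)⁻¹ • (a + b + c) - ((1 - t) • ![a, b, c] i + t • ![a, b, c] j) := by
          fin_cases i <;> fin_cases j <;>
            simp [Fin.sum_univ_three, Matrix.cons_val_zero, Matrix.cons_val_one] <;> module
        rw [this, ← hteq, sub_self])
      k (Finset.mem_univ k)
    simp [hki, hkj] at hzero
  -- indices for members of {a,b,c}
  have idx : ∀ x ∈ ({a, b, c} : Set (EuclideanSpace ℝ (Fin 3))),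
      ∃ i : Fin 3, ![a, b, c] i = x := by
    rintro x (rfl | rfl | rfl)
    exacts [⟨0, rfl⟩, ⟨1, rfl⟩, ⟨2, rfl⟩]
  have hs₁K : γ s₁ ∈ K := hK ▸ subset_convexHull ℝ _ ⟨s₁, rfl⟩
  have hs₂K : γ s₂ ∈ K := hK ▸ subset_convexHull ℝ _ ⟨s₂, rfl⟩
  rcases eq_or_lt_of_le hu0 with h0 | h0
  · -- u = 0
    have hcg : (3:ℝ)⁻¹ • (a + b + c) = γ s₁ := by rw [heq, ← h0]; module
    have hmem : γ s₁ ∈ ({a, b, c} : Set _) := by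
      rw [← honly]; exact ⟨⟨s₁, rfl⟩, hcg ▸ hcentT⟩
    obtain ⟨i, hi⟩ := idx _ hmem
    exact key i i 0 (by rw [hcg, hi]; module)
  rcases eq_or_lt_of_le hu1 with h1 | h1
  · -- u = 1
    have hcg : (3:ℝ)⁻¹ • (a + b + c) = γ s₂ := by rw [heq, h1]; module
    have hmem : γ s₂ ∈ ({a, b, c} : Set _) := by
      rw [← honly]; exact ⟨⟨s₂, rfl⟩, hcg ▸ hcentT⟩
    obtain ⟨i, hi⟩ := idx _ hmem
    exact key i i 1 (by rw [hcg, hi]; module)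
  -- 0 < u < 1
  have hopen : (3:ℝ)⁻¹ • (a + b + c) ∈ openSegment ℝ (γ s₁) (γ s₂) :=
    ⟨1 - u, u, by linarith, h0, by ring, by rw [heq]; module⟩
  obtain ⟨h1T, h2T⟩ := And.intro (hface.left_mem_of_mem_openSegment hs₁K hs₂K hcentT hopen)
    (hface.right_mem_of_mem_openSegment hs₁K hs₂K hcentT hopen)
  have hmem₁ : γ s₁ ∈ ({a, b, c} : Set _) := by rw [← honly]; exact ⟨⟨s₁, rfl⟩, h1T⟩
  have hmem₂ : γ s₂ ∈ ({a, b, c} : Set _) := by rw [← honly]; exact ⟨⟨s₂, rfl⟩, h2T⟩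
  obtain ⟨i, hi⟩ := idx _ hmem₁
  obtain ⟨j, hj⟩ := idx _ hmem₂
  exact key i j u (by rw [heq, hi, hj]; module)
end
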